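/- For any (n+1)-tuple x satisfying 0 ≤ x_i ≤ i-1 for all i, there exists a unique componentwise-minimal (n+1)-tuple g with g ≥ x componentwise such that g satisfies condition (i): g_i ≤ g_j - (j-i) whenever i < j and g_j - (j-i) ≥ 0. Explicitly, g is given inductively by g_i = max over 0 ≤ j ≤ x_i of (g_{i-j} + j). -/

import Mathlib

/-- Condition (i) for type `A_n` bracket vectors (0-based indices). -/
def condIA (n : ℕ) (r : Fin (n + 1) → ℕ) : Prop :=
  ∀ i j : Fin (n + 1), i < j → (j : ℕ) - (i : ℕ) ≤ r j →
    r i + ((j : ℕ) - (i : ℕ)) ≤ r j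

/-- The inductive closure: `g_i = max over 0 ≤ j ≤ x_i of (g_{i-j} + j)`,
where the `j = 0` term is read as `x_i` itself. -/
def upA (x : ℕ → ℕ) : ℕ → ℕ := fun k =>
  Finset.sup (Finset.range (x k + 1)) fun j =>
    if h : 0 < j ∧ j ≤ k then upA x (k - j) + j else x k
termination_by k => k
decreasing_by omega

lemma upA_eq (x : ℕ → ℕ) (k : ℕ) :
    upA x k = Finset.sup (Finset.range (x k + 1)) fun j =>
      if h : 0 < j ∧ j ≤ k then upA x (k - j) + j else x k := by
  conv_lhs => rw [upA]

lemma le_upA (x : ℕ → ℕ) (k : ℕ) : x k ≤ upA x k := by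
  rw [upA_eq]
  have h0 : (0 : ℕ) ∈ Finset.range (x k + 1) := by simp
  have := Finset.le_sup (f := fun j =>
    if h : 0 < j ∧ j ≤ k then upA x (k - j) + j else x k) h0
  simpa using this

lemma term_le (x : ℕ → ℕ) {k j : ℕ} (h1 : 0 < j) (h2 : j ≤ x k) (h3 : j ≤ k) :
    upA x (k - j) + j ≤ upA x k := by
  conv_rhs => rw [upA_eq]
  have hmem : j ∈ Finset.range (x k + 1) := Finset.mem_range.mpr (by omega)
  have := Finset.le_sup (f := fun j =>
    if h : 0 < j ∧ j ≤ k then upA x (k - j) + j else x k) hmem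
  simpa [dif_pos (⟨h1, h3⟩ : 0 < j ∧ j ≤ k)] using this

lemma upA_claim (x : ℕ → ℕ) (hx : ∀ k, x k ≤ k) :
    ∀ k d, 0 < d → d ≤ k → d ≤ upA x k → upA x (k - d) + d ≤ upA x k := by
  intro k
  induction k using Nat.strong_induction_on with
  | _ k IH =>
    intro d hd hdk hdu
    set f : ℕ → ℕ := fun j => if h : 0 < j ∧ j ≤ k then upA x (k - j) + j else x k with hf
    have hne : (Finset.range (x k + 1)).Nonempty := ⟨0, by simp⟩
    obtain ⟨j, hjmem, hj⟩ := Finset.exists_mem_eq_sup _ hne f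
    have hju : upA x k = f j := by rw [upA_eq]; exact hj
    have hjx : j ≤ x k := Nat.lt_succ_iff.mp (Finset.mem_range.mp hjmem)
    by_cases hjj : 0 < j ∧ j ≤ k
    · have hfj : f j = upA x (k - j) + j := dif_pos hjj
      by_cases hdj : d ≤ j
      · exact term_le x hd (le_trans hdj hjx) hdk
      · push_neg at hdj
        have hdu' : d ≤ upA x (k - j) + j := by rw [hju, hfj] at hdu; exact hdu
        have h2 : d - j ≤ upA x (k - j) := by omega
        have h3 := IH (k - j) (by omega) (d - j) (by omega) (by omega) h2
        have hEq : (k - j) - (d - j) = k - d := by omega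
        rw [hEq] at h3
        have : upA x (k - d) + d ≤ upA x (k - j) + j := by omega
        calc upA x (k - d) + d ≤ upA x (k - j) + j := this
          _ = upA x k := by rw [hju, hfj]
    · have hfj : f j = x k := dif_neg hjj
      have hdx : d ≤ x k := by rw [hju, hfj] at hdu; exact hdu
      exact term_le x hd hdx hdk

lemma upA_le (n : ℕ) (x : Fin (n + 1) → ℕ) (y : ℕ → ℕ)
    (hy : ∀ m (h : m < n + 1), y m = x ⟨m, h⟩)
    (h : Fin (n + 1) → ℕ) (hcond : condIA n h) (hxh : x ≤ h) :
    ∀ k (hk : k < n + 1), upA y k ≤ h ⟨k, hk⟩ := by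
  intro k
  induction k using Nat.strong_induction_on with
  | _ k IH =>
    intro hk
    rw [upA_eq]
    apply Finset.sup_le
    intro j hjmem
    have hjx : j ≤ y k := Nat.lt_succ_iff.mp (Finset.mem_range.mp hjmem)
    rw [hy k hk] at hjx
    have hjh : j ≤ h ⟨k, hk⟩ := le_trans hjx (hxh ⟨k, hk⟩)
    by_cases hjj : 0 < j ∧ j ≤ k
    · rw [dif_pos hjj]
      have h1 : k - j < n + 1 := by omega
      have h2 := IH (k - j) (by omega) h1
      have hlt : (⟨k - j, h1⟩ : Fin (n + 1)) < ⟨k, hk⟩ := by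
        simp [Fin.lt_def]; omega
      have hsub : (k : ℕ) - (k - j) = j := by omega
      have h3 := hcond ⟨k - j, h1⟩ ⟨k, hk⟩ hlt (by simpa [hsub] using hjh)
      simp only [hsub] at h3
      omega
    · rw [dif_neg hjj, hy k hk]
      exact hxh ⟨k, hk⟩

/-- For any `(n+1)`-tuple `x` with `0 ≤ x_i ≤ i-1`, there is a unique
componentwise-minimal tuple `g ≥ x` satisfying condition (i), and it is given
by the inductive formula `g_i = max_{0 ≤ j ≤ x_i} (g_{i-j} + j)`. -/
theorem upA_spec (n : ℕ) (x : Fin (n + 1) → ℕ) (hx : ∀ k, x k ≤ (k : ℕ)) :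
    (∃! g : Fin (n + 1) → ℕ,
      condIA n g ∧ x ≤ g ∧ ∀ h : Fin (n + 1) → ℕ, condIA n h → x ≤ h → g ≤ h) ∧
    (∀ g : Fin (n + 1) → ℕ,
      (condIA n g ∧ x ≤ g ∧ ∀ h : Fin (n + 1) → ℕ, condIA n h → x ≤ h → g ≤ h) →
      ∀ k : Fin (n + 1), g k = upA (fun m => if h : m < n + 1 then x ⟨m, h⟩ else 0) k) := by
  set y : ℕ → ℕ := fun m => if h : m < n + 1 then x ⟨m, h⟩ else 0 with hy
  have hyk : ∀ k, y k ≤ k := by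
    intro k
    by_cases h : k < n + 1
    · simpa [hy, h, Nat.le_of_lt_succ h] using hx ⟨k, h⟩
    · simp [hy, h, show ¬ k ≤ n by omega]
  have hyx : ∀ m (h : m < n + 1), y m = x ⟨m, h⟩ := by
    intro m h; simp [hy, h, Nat.le_of_lt_succ h]
  set G : Fin (n + 1) → ℕ := fun k => upA y k with hG
  have hGcond : condIA n G := by
    intro i j hij hle
    have hd : 0 < (j : ℕ) - (i : ℕ) := by
      have := (Fin.lt_def).mp hij; omega
    have hij' : (i : ℕ) ≤ (j : ℕ) := by omega
    have := upA_claim y hyk (j : ℕ) ((j : ℕ) - (i : ℕ)) hd (by omega) hle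
    have hEq : (j : ℕ) - ((j : ℕ) - (i : ℕ)) = (i : ℕ) := by omega
    rw [hEq] at this
    exact this
  have hxG : x ≤ G := by
    intro k
    have h1 : y (k : ℕ) = x k := by
      simp [hy, k.isLt, Nat.le_of_lt_succ k.isLt]
    calc x k = y (k : ℕ) := h1.symm
      _ ≤ upA y (k : ℕ) := le_upA y (k : ℕ)
  have hGmin : ∀ h : Fin (n + 1) → ℕ, condIA n h → x ≤ h → G ≤ h := by
    intro h hc hxh k
    have := upA_le n x y hyx h hc hxh (k : ℕ) k.isLt
    simpa using this
  have key : ∀ g : Fin (n + 1) → ℕ,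
      (condIA n g ∧ x ≤ g ∧ ∀ h : Fin (n + 1) → ℕ, condIA n h → x ≤ h → g ≤ h) →
      g = G := by
    rintro g ⟨hg1, hg2, hg3⟩
    exact le_antisymm (hg3 G hGcond hxG) (hGmin g hg1 hg2)
  constructor
  · exact ⟨G, ⟨hGcond, hxG, hGmin⟩, key⟩
  · intro g hg k
    rw [key g hg]
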